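/- If Ψ satisfies 4iε Ψ_x = [[4E + z⁻¹(1-cos u), -z⁻¹ sin u - iε(u_x + u_t)],[-z⁻¹ sin u + iε(u_x + u_t), -4E - z⁻¹(1-cos u)]] Ψ, then J := A Ψ with A = [[cos(u/4), sin(u/4)],[-sin(u/4), cos(u/4)]] satisfies 4iε J_x = [[4E cos(u/2), -4D sin(u/2) - iε u_t],[-4D sin(u/2) + iε u_t, -4E cos(u/2)]] J, where D = (z + 1/z)/4 and E = (z - 1/z)/4. -/

import Mathlib

open Complex Matrix

/-- The rotation by `-u/4` conjugates the infinity-gauge Lax operator into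
its symmetric-gauge form.  Here `u, ut : ℝ → ℝ` are the values of `u` and
`u_t` at a fixed time, `ux = u'`, `z ≠ 0`, `D = (z+1/z)/4`, `E = (z-1/z)/4`. -/
theorem symmetric_gauge_transformation (ε : ℝ) (hε : 0 < ε)
    (z : ℂ) (hz : z ≠ 0) (u ut : ℝ → ℝ) (hu : Differentiable ℝ u)
    (Ψ : ℝ → Fin 2 → ℂ)
    (hΨ : ∀ x, HasDerivAt Ψ
      ((4 * Complex.I * (ε : ℂ))⁻¹ •
        (Matrix.of ![![4 * ((z - z⁻¹) / 4) + z⁻¹ * (1 - Real.cos (u x)),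
            -z⁻¹ * Real.sin (u x) -
              Complex.I * ε * ((deriv u x : ℝ) + ut x)],
          ![-z⁻¹ * Real.sin (u x) +
              Complex.I * ε * ((deriv u x : ℝ) + ut x),
            -(4 * ((z - z⁻¹) / 4)) - z⁻¹ * (1 - Real.cos (u x))]]).mulVec
        (Ψ x)) x) :
    ∀ x, HasDerivAt
      (fun y => (Matrix.of
          ![![(Real.cos (u y / 4) : ℂ), (Real.sin (u y / 4) : ℂ)],
            ![-(Real.sin (u y / 4) : ℂ), (Real.cos (u y / 4) : ℂ)]]).mulVec
        (Ψ y))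
      ((4 * Complex.I * (ε : ℂ))⁻¹ •
        (Matrix.of ![![4 * ((z - z⁻¹) / 4) * Real.cos (u x / 2),
            -(4 * ((z + z⁻¹) / 4)) * Real.sin (u x / 2) -
              Complex.I * ε * ut x],
          ![-(4 * ((z + z⁻¹) / 4)) * Real.sin (u x / 2) +
              Complex.I * ε * ut x,
            -(4 * ((z - z⁻¹) / 4)) * Real.cos (u x / 2)]]).mulVec
        ((Matrix.of
          ![![(Real.cos (u x / 4) : ℂ), (Real.sin (u x / 4) : ℂ)],
            ![-(Real.sin (u x / 4) : ℂ), (Real.cos (u x / 4) : ℂ)]]).mulVec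
          (Ψ x))) x := by
  intro x
  have hq : HasDerivAt (fun y => u y / 4) (deriv u x / 4) x := (hu x).hasDerivAt.div_const 4
  have hc : HasDerivAt (fun y => ((Real.cos (u y / 4) : ℝ) : ℂ))
      ((-Real.sin (u x / 4) * (deriv u x / 4) : ℝ)) x :=
    by have h := (Real.hasDerivAt_cos (u x / 4)).comp x hq; exact h.ofReal_comp
  have hs : HasDerivAt (fun y => ((Real.sin (u y / 4) : ℝ) : ℂ))
      ((Real.cos (u x / 4) * (deriv u x / 4) : ℝ)) x :=
    by have h := (Real.hasDerivAt_sin (u x / 4)).comp x hq; exact h.ofReal_comp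
  have hns : HasDerivAt (fun y => -((Real.sin (u y / 4) : ℝ) : ℂ))
      (-(Real.cos (u x / 4) * (deriv u x / 4) : ℝ)) x := hs.neg
  have hΨ0 : HasDerivAt (fun y => Ψ y 0)
      (((4 * Complex.I * (ε : ℂ))⁻¹ •
        (Matrix.of ![![4 * ((z - z⁻¹) / 4) + z⁻¹ * (1 - Real.cos (u x)),
            -z⁻¹ * Real.sin (u x) -
              Complex.I * ε * ((deriv u x : ℝ) + ut x)],
          ![-z⁻¹ * Real.sin (u x) +
              Complex.I * ε * ((deriv u x : ℝ) + ut x),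
            -(4 * ((z - z⁻¹) / 4)) - z⁻¹ * (1 - Real.cos (u x))]]).mulVec
        (Ψ x)) 0) x := hasDerivAt_pi.mp (hΨ x) 0
  have hΨ1 : HasDerivAt (fun y => Ψ y 1)
      (((4 * Complex.I * (ε : ℂ))⁻¹ •
        (Matrix.of ![![4 * ((z - z⁻¹) / 4) + z⁻¹ * (1 - Real.cos (u x)),
            -z⁻¹ * Real.sin (u x) -
              Complex.I * ε * ((deriv u x : ℝ) + ut x)],
          ![-z⁻¹ * Real.sin (u x) +
              Complex.I * ε * ((deriv u x : ℝ) + ut x),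
            -(4 * ((z - z⁻¹) / 4)) - z⁻¹ * (1 - Real.cos (u x))]]).mulVec
        (Ψ x)) 1) x := hasDerivAt_pi.mp (hΨ x) 1
  have hεI : (4 * Complex.I * (ε : ℂ)) ≠ 0 := by
    simp [Complex.I_ne_zero, hε.ne']
  have hk : (4 * Complex.I * (ε : ℂ)) * (4 * Complex.I * (ε : ℂ))⁻¹ = 1 :=
    mul_inv_cancel₀ hεI
  apply hasDerivAt_pi.mpr
  intro i
  fin_cases i
  · have h0 := (hc.mul hΨ0).add (hs.mul hΨ1)
    simp only [Matrix.mulVec, Matrix.of_apply, dotProduct, Fin.sum_univ_two,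
      Pi.smul_apply, smul_eq_mul, Matrix.cons_val', Matrix.cons_val_zero,
      Matrix.cons_val_one, Matrix.head_cons, Matrix.empty_val',
      Matrix.cons_val_fin_one, Matrix.head_fin_const, Fin.zero_eta, Fin.mk_one,
      Fin.isValue] at h0 ⊢
    convert h0 using 1
    · rfl
    set a := u x / 4 with ha
    rw [show u x / 2 = 2 * a by rw [ha]; ring, show u x = 2 * (2 * a) by rw [ha]; ring]
    have hsc : Complex.sin (a : ℂ) ^ 2 + Complex.cos (a : ℂ) ^ 2 = 1 :=
      Complex.sin_sq_add_cos_sq (a : ℂ)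
    simp only [Real.sin_two_mul, Real.cos_two_mul]
    push_cast
    linear_combination (((-2) * Complex.cos (a : ℂ) * z⁻¹ + 2 * Complex.cos (a : ℂ) * z +
        8 * Complex.cos (a : ℂ) ^ 3 * z⁻¹) * (4 * Complex.I * (ε : ℂ))⁻¹ * Ψ x 0) * hsc +
      ((Complex.cos (a : ℂ) * Ψ x 1 - Complex.sin (a : ℂ) * Ψ x 0) * ((deriv u x : ℝ) : ℂ) / 4) * hk
  · have h1 := (hns.mul hΨ0).add (hc.mul hΨ1)
    simp only [Matrix.mulVec, Matrix.of_apply, dotProduct, Fin.sum_univ_two,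
      Pi.smul_apply, smul_eq_mul, Matrix.cons_val', Matrix.cons_val_zero,
      Matrix.cons_val_one, Matrix.head_cons, Matrix.empty_val',
      Matrix.cons_val_fin_one, Matrix.head_fin_const, Fin.zero_eta, Fin.mk_one,
      Fin.isValue] at h1 ⊢
    convert h1 using 1
    · rfl
    set a := u x / 4 with ha
    rw [show u x / 2 = 2 * a by rw [ha]; ring, show u x = 2 * (2 * a) by rw [ha]; ring]
    have hsc : Complex.sin (a : ℂ) ^ 2 + Complex.cos (a : ℂ) ^ 2 = 1 :=
      Complex.sin_sq_add_cos_sq (a : ℂ)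
    simp only [Real.sin_two_mul, Real.cos_two_mul]
    push_cast
    linear_combination ((2 * Complex.cos (a : ℂ) * z⁻¹ - 2 * Complex.cos (a : ℂ) * z -
        8 * Complex.cos (a : ℂ) ^ 3 * z⁻¹) * (4 * Complex.I * (ε : ℂ))⁻¹ * Ψ x 1) * hsc +
      ((-Complex.cos (a : ℂ) * Ψ x 0 - Complex.sin (a : ℂ) * Ψ x 1) * ((deriv u x : ℝ) : ℂ) / 4) * hk
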